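/- Let (H, α) be a monoidal Hom-bialgebra with Drinfeld twist σ and inverse ϱ, and let (A, α_A) be a left H-Hom-module algebra. Define a ∘ b := (ϱ⁽¹⁾·a)(ϱ⁽²⁾·b) for a, b ∈ A. Then (A, α_A², ∘, 1_A) is a monoidal Hom-algebra: α_A²(a∘b) = α_A²(a)∘α_A²(b), α_A²(a)∘(b∘c) = (a∘b)∘α_A²(c), and 1_A∘a = a∘1_A = α_A²(a). -/

import Mathlib

open TensorProduct

noncomputable section
namespace HomTwist

variable {k : Type*} [CommRing k]

section Defs
variable {H₁ H₂ A B : Type*} [AddCommGroup H₁] [Module k H₁] [AddCommGroup H₂] [Module k H₂]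
  [AddCommGroup A] [Module k A] [AddCommGroup B] [Module k B]

/-- The componentwise "action" of `H₁ ⊗ H₂` on `A ⊗ B` induced by bilinear actions
`f : H₁ → A → A` and `g : H₂ → B → B`:  `(h₁ ⊗ h₂) • (a ⊗ b) = (f h₁ a) ⊗ (g h₂ b)`. -/
def pairMap (f : H₁ →ₗ[k] A →ₗ[k] A) (g : H₂ →ₗ[k] B →ₗ[k] B) :
    (H₁ ⊗[k] H₂) →ₗ[k] (A ⊗[k] B) →ₗ[k] A ⊗[k] B :=
  TensorProduct.lift (((TensorProduct.mapBilinear (RingHom.id k) A B A B).comp f).compl₂ g)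

end Defs

section Structures
variable {H : Type*} [AddCommGroup H] [Module k H]

/-- Componentwise product on `H ⊗ H` induced by a bilinear multiplication on `H`. -/
def mulT (mul : H →ₗ[k] H →ₗ[k] H) : (H ⊗[k] H) →ₗ[k] (H ⊗[k] H) →ₗ[k] H ⊗[k] H :=
  pairMap mul mul

/-- Componentwise product on `H ⊗ (H ⊗ H)`. -/
def mulT3 (mul : H →ₗ[k] H →ₗ[k] H) :
    (H ⊗[k] (H ⊗[k] H)) →ₗ[k] (H ⊗[k] (H ⊗[k] H)) →ₗ[k] H ⊗[k] (H ⊗[k] H) :=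
  pairMap mul (mulT mul)

/-- `(r ⊗ R) ↦ r⁽¹⁾ ⊗ (R⁽¹⁾ ⊗ r⁽²⁾R⁽²⁾)`. -/
def hexA (mul : H →ₗ[k] H →ₗ[k] H) :
    ((H ⊗[k] H) ⊗[k] (H ⊗[k] H)) →ₗ[k] H ⊗[k] (H ⊗[k] H) :=
  (TensorProduct.assoc k H H H).toLinearMap
    ∘ₗ TensorProduct.map LinearMap.id (TensorProduct.lift mul)
    ∘ₗ (TensorProduct.tensorTensorTensorComm k H H H H).toLinearMap

/-- `(r ⊗ R) ↦ r⁽¹⁾R⁽¹⁾ ⊗ (R⁽²⁾ ⊗ r⁽²⁾)`. -/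
def hexB (mul : H →ₗ[k] H →ₗ[k] H) :
    ((H ⊗[k] H) ⊗[k] (H ⊗[k] H)) →ₗ[k] H ⊗[k] (H ⊗[k] H) :=
  TensorProduct.map (TensorProduct.lift mul) (TensorProduct.comm k H H).toLinearMap
    ∘ₗ (TensorProduct.tensorTensorTensorComm k H H H H).toLinearMap

/-- Axioms of a monoidal Hom-bialgebra (Caenepeel–Goyvaerts). -/
structure IsMonHomBialgebra (mul : H →ₗ[k] H →ₗ[k] H) (one : H) (alpha : H ≃ₗ[k] H)
    (comul : H →ₗ[k] H ⊗[k] H) (counit : H →ₗ[k] k) : Prop where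
  alpha_mul : ∀ a b, alpha (mul a b) = mul (alpha a) (alpha b)
  hom_assoc : ∀ a b c, mul (alpha a) (mul b c) = mul (mul a b) (alpha c)
  alpha_one : alpha one = one
  one_mul' : ∀ a, mul one a = alpha a
  mul_one' : ∀ a, mul a one = alpha a
  comul_alpha : ∀ c, comul (alpha c)
      = TensorProduct.map alpha.toLinearMap alpha.toLinearMap (comul c)
  hom_coassoc : ∀ c,
      TensorProduct.map alpha.symm.toLinearMap comul (comul c)
        = TensorProduct.assoc k H H H
            (TensorProduct.map comul alpha.symm.toLinearMap (comul c))
  counit_alpha : ∀ c, counit (alpha c) = counit c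
  counit_id : ∀ c, TensorProduct.lid k H
      (TensorProduct.map counit LinearMap.id (comul c)) = alpha.symm c
  id_counit : ∀ c, TensorProduct.rid k H
      (TensorProduct.map LinearMap.id counit (comul c)) = alpha.symm c
  comul_mul : ∀ a b, comul (mul a b) = mulT mul (comul a) (comul b)
  comul_one : comul one = one ⊗ₜ[k] one
  counit_mul : ∀ a b, counit (mul a b) = counit a * counit b
  counit_one : counit one = 1

/-- Axioms of a (Makhlouf–Silvestrov) Hom-bialgebra (with bijective structure map). -/
structure IsHomBialgebra (mul : H →ₗ[k] H →ₗ[k] H) (one : H) (alpha : H ≃ₗ[k] H)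
    (comul : H →ₗ[k] H ⊗[k] H) (counit : H →ₗ[k] k) : Prop where
  alpha_mul : ∀ a b, alpha (mul a b) = mul (alpha a) (alpha b)
  hom_assoc : ∀ a b c, mul (alpha a) (mul b c) = mul (mul a b) (alpha c)
  alpha_one : alpha one = one
  one_mul' : ∀ a, mul one a = alpha a
  mul_one' : ∀ a, mul a one = alpha a
  comul_alpha : ∀ c, comul (alpha c)
      = TensorProduct.map alpha.toLinearMap alpha.toLinearMap (comul c)
  hom_coassoc : ∀ c,
      TensorProduct.map alpha.toLinearMap comul (comul c)
        = TensorProduct.assoc k H H H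
            (TensorProduct.map comul alpha.toLinearMap (comul c))
  counit_alpha : ∀ c, counit (alpha c) = counit c
  counit_id : ∀ c, TensorProduct.lid k H
      (TensorProduct.map counit LinearMap.id (comul c)) = alpha c
  id_counit : ∀ c, TensorProduct.rid k H
      (TensorProduct.map LinearMap.id counit (comul c)) = alpha c
  comul_mul : ∀ a b, comul (mul a b) = mulT mul (comul a) (comul b)
  comul_one : comul one = one ⊗ₜ[k] one
  counit_mul : ∀ a b, counit (mul a b) = counit a * counit b
  counit_one : counit one = 1

/-- Axioms of an ordinary (possibly noncommutative) bialgebra, given by raw data. -/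
structure IsBialgebra (mul : H →ₗ[k] H →ₗ[k] H) (one : H)
    (comul : H →ₗ[k] H ⊗[k] H) (counit : H →ₗ[k] k) : Prop where
  assoc : ∀ a b c, mul (mul a b) c = mul a (mul b c)
  one_mul' : ∀ a, mul one a = a
  mul_one' : ∀ a, mul a one = a
  coassoc : ∀ c, TensorProduct.map LinearMap.id comul (comul c)
      = TensorProduct.assoc k H H H (TensorProduct.map comul LinearMap.id (comul c))
  counit_id : ∀ c, TensorProduct.lid k H
      (TensorProduct.map counit LinearMap.id (comul c)) = c
  id_counit : ∀ c, TensorProduct.rid k H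
      (TensorProduct.map LinearMap.id counit (comul c)) = c
  comul_mul : ∀ a b, comul (mul a b) = mulT mul (comul a) (comul b)
  comul_one : comul one = one ⊗ₜ[k] one
  counit_mul : ∀ a b, counit (mul a b) = counit a * counit b
  counit_one : counit one = 1

/-- A Drinfeld twist `σ` (with inverse `ϱ`) for a monoidal Hom-bialgebra. -/
structure IsTwist (mul : H →ₗ[k] H →ₗ[k] H) (one : H) (alpha : H ≃ₗ[k] H)
    (comul : H →ₗ[k] H ⊗[k] H) (counit : H →ₗ[k] k) (σ ϱ : H ⊗[k] H) : Prop where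
  mul_inv : mulT mul σ ϱ = one ⊗ₜ[k] one
  inv_mul : mulT mul ϱ σ = one ⊗ₜ[k] one
  T1 : TensorProduct.map alpha.toLinearMap alpha.toLinearMap σ = σ
  T2l : TensorProduct.lid k H (TensorProduct.map counit LinearMap.id σ) = one
  T2r : TensorProduct.rid k H (TensorProduct.map LinearMap.id counit σ) = one
  T3 : TensorProduct.map LinearMap.id (mulT mul σ)
        (TensorProduct.map LinearMap.id comul σ)
      = TensorProduct.assoc k H H H
          (TensorProduct.map (mulT mul σ) LinearMap.id
            (TensorProduct.map comul LinearMap.id σ))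

/-- The `R`-matrix axioms (Q1)–(Q4) for a monoidal Hom-bialgebra. -/
structure IsRMatrix (mul : H →ₗ[k] H →ₗ[k] H) (alpha : H ≃ₗ[k] H)
    (comul : H →ₗ[k] H ⊗[k] H) (R : H ⊗[k] H) : Prop where
  Q1 : TensorProduct.map alpha.toLinearMap alpha.toLinearMap R = R
  Q2 : ∀ h, mulT mul R (comul h)
      = mulT mul (TensorProduct.comm k H H (comul h)) R
  Q3 : TensorProduct.assoc k H H H (TensorProduct.map comul LinearMap.id R)
      = hexA mul (R ⊗ₜ[k] R)
  Q4 : TensorProduct.map LinearMap.id comul R = hexB mul (R ⊗ₜ[k] R)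

/-- Axioms of a monoidal Hom-algebra. -/
structure IsMonHomAlgebra {A : Type*} [AddCommGroup A] [Module k A]
    (mul : A →ₗ[k] A →ₗ[k] A) (one : A) (alpha : A ≃ₗ[k] A) : Prop where
  alpha_mul : ∀ a b, alpha (mul a b) = mul (alpha a) (alpha b)
  hom_assoc : ∀ a b c, mul (alpha a) (mul b c) = mul (mul a b) (alpha c)
  alpha_one : alpha one = one
  one_mul' : ∀ a, mul one a = alpha a
  mul_one' : ∀ a, mul a one = alpha a

/-- Axioms of a monoidal Hom-coalgebra. -/
structure IsMonHomCoalgebra {C : Type*} [AddCommGroup C] [Module k C]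
    (comul : C →ₗ[k] C ⊗[k] C) (counit : C →ₗ[k] k) (alpha : C ≃ₗ[k] C) : Prop where
  comul_alpha : ∀ c, comul (alpha c)
      = TensorProduct.map alpha.toLinearMap alpha.toLinearMap (comul c)
  hom_coassoc : ∀ c,
      TensorProduct.map alpha.symm.toLinearMap comul (comul c)
        = TensorProduct.assoc k C C C
            (TensorProduct.map comul alpha.symm.toLinearMap (comul c))
  counit_alpha : ∀ c, counit (alpha c) = counit c
  counit_id : ∀ c, TensorProduct.lid k C
      (TensorProduct.map counit LinearMap.id (comul c)) = alpha.symm c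
  id_counit : ∀ c, TensorProduct.rid k C
      (TensorProduct.map LinearMap.id counit (comul c)) = alpha.symm c

/-- Axioms of a left `H`-Hom-module. -/
structure IsHomModule {M : Type*} [AddCommGroup M] [Module k M]
    (mul : H →ₗ[k] H →ₗ[k] H) (one : H) (alpha : H ≃ₗ[k] H)
    (alM : M ≃ₗ[k] M) (act : H →ₗ[k] M →ₗ[k] M) : Prop where
  compat : ∀ h m, alM (act h m) = act (alpha h) (alM m)
  hom_smul : ∀ h h' m, act (alpha h) (act h' m) = act (mul h h') (alM m)
  one_smul' : ∀ m, act one m = alM m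

/-- The twisted coproduct `Δᵠ(x) = (σ Δ(x)) ϱ`. -/
def twistComul (mul : H →ₗ[k] H →ₗ[k] H) (comul : H →ₗ[k] H ⊗[k] H)
    (σ ϱ : H ⊗[k] H) : H →ₗ[k] H ⊗[k] H :=
  ((mulT mul).flip ϱ) ∘ₗ (mulT mul σ) ∘ₗ comul

end Structures
end HomTwist
end

namespace HomTwist
open TensorProduct

section Aux
variable {k : Type*} [CommRing k]

section PairLemmas
variable {H₁ H₂ A B : Type*} [AddCommGroup H₁] [Module k H₁] [AddCommGroup H₂] [Module k H₂]
  [AddCommGroup A] [Module k A] [AddCommGroup B] [Module k B]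

@[simp] lemma pairMap_tmul (f : H₁ →ₗ[k] A →ₗ[k] A) (g : H₂ →ₗ[k] B →ₗ[k] B)
    (h : H₁) (x : H₂) (a : A) (b : B) :
    pairMap f g (h ⊗ₜ[k] x) (a ⊗ₜ[k] b) = f h a ⊗ₜ[k] g x b := by
  simp [pairMap]

end PairLemmas

section MulTLemmas
variable {H : Type*} [AddCommGroup H] [Module k H]

@[simp] lemma mulT_tmul (mul : H →ₗ[k] H →ₗ[k] H) (a b c d : H) :
    mulT mul (a ⊗ₜ[k] b) (c ⊗ₜ[k] d) = mul a c ⊗ₜ[k] mul b d :=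
  pairMap_tmul mul mul a b c d

lemma IsMonHomBialgebra.toAlg {mul : H →ₗ[k] H →ₗ[k] H} {one : H} {alpha : H ≃ₗ[k] H}
    {comul : H →ₗ[k] H ⊗[k] H} {counit : H →ₗ[k] k}
    (hH : IsMonHomBialgebra mul one alpha comul counit) :
    IsMonHomAlgebra mul one alpha :=
  ⟨hH.alpha_mul, hH.hom_assoc, hH.alpha_one, hH.one_mul', hH.mul_one'⟩

end MulTLemmas

section Pair
variable {A B : Type*} [AddCommGroup A] [Module k A] [AddCommGroup B] [Module k B]

lemma IsMonHomAlgebra.pair {fA : A →ₗ[k] A →ₗ[k] A} {oA : A} {aA : A ≃ₗ[k] A}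
    {fB : B →ₗ[k] B →ₗ[k] B} {oB : B} {aB : B ≃ₗ[k] B}
    (hA : IsMonHomAlgebra fA oA aA) (hB : IsMonHomAlgebra fB oB aB) :
    IsMonHomAlgebra (pairMap fA fB) (oA ⊗ₜ[k] oB) (TensorProduct.congr aA aB) := by
  constructor
  · intro x y
    induction x using TensorProduct.induction_on with
    | zero => simp
    | tmul a b =>
      induction y using TensorProduct.induction_on with
      | zero => simp
      | tmul c d => simp [hA.alpha_mul, hB.alpha_mul]
      | add u v hu hv => simp only [map_add, hu, hv]
    | add u v hu hv => simp only [map_add, LinearMap.add_apply, hu, hv]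
  · intro x y z
    induction x using TensorProduct.induction_on with
    | zero => simp
    | tmul a b =>
      induction y using TensorProduct.induction_on with
      | zero => simp
      | tmul c d =>
        induction z using TensorProduct.induction_on with
        | zero => simp
        | tmul e f => simp [hA.hom_assoc, hB.hom_assoc]
        | add u v hu hv => simp only [map_add, hu, hv]
      | add u v hu hv => simp only [map_add, LinearMap.add_apply, hu, hv]
    | add u v hu hv => simp only [map_add, LinearMap.add_apply, hu, hv]
  · simp [hA.alpha_one, hB.alpha_one]
  · intro x
    induction x using TensorProduct.induction_on with
    | zero => simp
    | tmul a b => simp [hA.one_mul', hB.one_mul']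
    | add u v hu hv => simp only [map_add, hu, hv]
  · intro x
    induction x using TensorProduct.induction_on with
    | zero => simp
    | tmul a b => simp [hA.mul_one', hB.mul_one']
    | add u v hu hv => simp only [map_add, LinearMap.add_apply, hu, hv]

end Pair

section Mon
variable {T : Type*} [AddCommGroup T] [Module k T]

/-- The "untwisted" ordinary multiplication associated to a monoidal Hom-algebra. -/
def m0 (mT : T →ₗ[k] T →ₗ[k] T) (aT : T ≃ₗ[k] T) (x y : T) : T :=
  mT (aT.symm x) (aT.symm y)

variable {mT : T →ₗ[k] T →ₗ[k] T} {oT : T} {aT : T ≃ₗ[k] T}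
variable (hT : IsMonHomAlgebra mT oT aT)
include hT

lemma symm_one : aT.symm oT = oT := by
  conv_lhs => rw [← hT.alpha_one]
  simp

lemma symm_mul (u v : T) : aT.symm (mT u v) = mT (aT.symm u) (aT.symm v) := by
  apply aT.injective
  rw [hT.alpha_mul]; simp

lemma m0_one_mul (x : T) : m0 mT aT oT x = x := by
  rw [m0, symm_one hT, hT.one_mul']; simp

lemma m0_mul_one (x : T) : m0 mT aT x oT = x := by
  rw [m0, symm_one hT, hT.mul_one']; simp

lemma m0_assoc (x y z : T) : m0 mT aT (m0 mT aT x y) z = m0 mT aT x (m0 mT aT y z) := by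
  simp only [m0, symm_mul hT]
  rw [show aT.symm z = aT (aT.symm (aT.symm z)) by simp, ← hT.hom_assoc]
  simp

lemma m0_inv_unique {x y y' : T} (h1 : m0 mT aT x y = oT) (h2 : m0 mT aT y' x = oT) :
    y = y' := by
  have := m0_assoc hT y' x y
  rw [h1, h2, m0_one_mul hT, m0_mul_one hT] at this
  exact this

lemma m0_inv_mul {x x' y y' : T}
    (hx : m0 mT aT x x' = oT ∧ m0 mT aT x' x = oT)
    (hy : m0 mT aT y y' = oT ∧ m0 mT aT y' y = oT) :
    m0 mT aT (m0 mT aT x y) (m0 mT aT y' x') = oT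
      ∧ m0 mT aT (m0 mT aT y' x') (m0 mT aT x y) = oT := by
  constructor
  · rw [m0_assoc hT, ← m0_assoc hT y y', hy.1, m0_one_mul hT, hx.1]
  · rw [m0_assoc hT, ← m0_assoc hT x' x, hx.2, m0_one_mul hT, hy.2]

lemma aT_m0 (x y : T) : aT (m0 mT aT x y) = m0 mT aT (aT x) (aT y) := by
  simp [m0, hT.alpha_mul]

end Mon

section MonHom
variable {T S : Type*} [AddCommGroup T] [Module k T] [AddCommGroup S] [Module k S]
  {mT : T →ₗ[k] T →ₗ[k] T} {oT : T} {aT : T ≃ₗ[k] T}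
  {mS : S →ₗ[k] S →ₗ[k] S} {oS : S} {aS : S ≃ₗ[k] S}

lemma m0_map (f : T →ₗ[k] S)
    (hmul : ∀ u v, f (mT u v) = mS (f u) (f v))
    (hsymm : ∀ u, f (aT.symm u) = aS.symm (f u)) (x y : T) :
    f (m0 mT aT x y) = m0 mS aS (f x) (f y) := by
  simp [m0, hmul, hsymm]

lemma m0_map_inv (f : T →ₗ[k] S)
    (hmul : ∀ u v, f (mT u v) = mS (f u) (f v))
    (hsymm : ∀ u, f (aT.symm u) = aS.symm (f u)) (hone : f oT = oS) {x y : T}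
    (h : m0 mT aT x y = oT ∧ m0 mT aT y x = oT) :
    m0 mS aS (f x) (f y) = oS ∧ m0 mS aS (f y) (f x) = oS := by
  constructor
  · rw [← m0_map f hmul hsymm, h.1, hone]
  · rw [← m0_map f hmul hsymm, h.2, hone]

end MonHom

section Twist
variable {H : Type*} [AddCommGroup H] [Module k H]
  (mul : H →ₗ[k] H →ₗ[k] H) (one : H) (alpha : H ≃ₗ[k] H)
  (comul : H →ₗ[k] H ⊗[k] H) (counit : H →ₗ[k] k) (σ ϱ : H ⊗[k] H)

lemma congr_coe (aA aB : H ≃ₗ[k] H) (x : H ⊗[k] H) :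
    (TensorProduct.congr aA aB) x = map aA.toLinearMap aB.toLinearMap x := rfl

lemma congr_symm_coe (aA aB : H ≃ₗ[k] H) (x : H ⊗[k] H) :
    (TensorProduct.congr aA aB).symm x = map aA.symm.toLinearMap aB.symm.toLinearMap x := by
  rw [TensorProduct.congr_symm]; rfl

variable (hH : IsMonHomBialgebra mul one alpha comul counit)
variable (hσ : IsTwist mul one alpha comul counit σ ϱ)

lemma mulT_eq : mulT mul = pairMap mul mul := rfl

include hH in
lemma hTalg : IsMonHomAlgebra (mulT mul) (one ⊗ₜ[k] one) (TensorProduct.congr alpha alpha) := by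
  rw [mulT_eq]; exact (hH.toAlg).pair (hH.toAlg)

include hH hσ

lemma aT_sigma : (TensorProduct.congr alpha alpha) σ = σ := by
  rw [congr_coe]; exact hσ.T1

lemma aT_symm_sigma : (TensorProduct.congr alpha alpha).symm σ = σ := by
  conv_lhs => rw [← aT_sigma mul one alpha comul counit σ ϱ hH hσ]
  simp

lemma aT_rho : (TensorProduct.congr alpha alpha) ϱ = ϱ := by
  set aT := TensorProduct.congr alpha alpha with haT
  have hT := hTalg mul one alpha comul counit hH
  have hs : aT.symm σ = σ := aT_symm_sigma mul one alpha comul counit σ ϱ hH hσ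
  have h1 : m0 (mulT mul) aT σ (aT ϱ) = one ⊗ₜ[k] one := by
    rw [m0, aT.symm_apply_apply, hs]; exact hσ.mul_inv
  have h2 : m0 (mulT mul) aT (aT ϱ) σ = one ⊗ₜ[k] one := by
    rw [m0, aT.symm_apply_apply, hs]; exact hσ.inv_mul
  have h3 : m0 (mulT mul) aT σ (aT (aT ϱ)) = one ⊗ₜ[k] one := by
    have h5 := aT_m0 hT σ (aT ϱ)
    rw [h1, aT_sigma mul one alpha comul counit σ ϱ hH hσ] at h5
    rw [← h5]
    simp [hH.alpha_one]
  have h4 := m0_inv_unique hT h3 h2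
  exact aT.injective h4

lemma map_alpha_rho : map alpha.toLinearMap alpha.toLinearMap ϱ = ϱ :=
  aT_rho mul one alpha comul counit σ ϱ hH hσ

lemma map_alpha_symm_rho : map alpha.symm.toLinearMap alpha.symm.toLinearMap ϱ = ϱ := by
  have h := aT_rho mul one alpha comul counit σ ϱ hH hσ
  conv_lhs => rw [← h]
  rw [← congr_symm_coe, LinearEquiv.symm_apply_apply]

lemma m0T_sigma_rho : m0 (mulT mul) (TensorProduct.congr alpha alpha) σ ϱ = one ⊗ₜ[k] one := by
  rw [m0, aT_symm_sigma mul one alpha comul counit σ ϱ hH hσ,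
    show (TensorProduct.congr alpha alpha).symm ϱ = ϱ from by
      conv_lhs => rw [← aT_rho mul one alpha comul counit σ ϱ hH hσ]
      simp]
  exact hσ.mul_inv

lemma m0T_rho_sigma : m0 (mulT mul) (TensorProduct.congr alpha alpha) ϱ σ = one ⊗ₜ[k] one := by
  rw [m0, aT_symm_sigma mul one alpha comul counit σ ϱ hH hσ,
    show (TensorProduct.congr alpha alpha).symm ϱ = ϱ from by
      conv_lhs => rw [← aT_rho mul one alpha comul counit σ ϱ hH hσ]
      simp]
  exact hσ.inv_mul

lemma eL_rho : (TensorProduct.lid k H) (map counit LinearMap.id ϱ) = one := by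
  set eL : H ⊗[k] H →ₗ[k] H := (TensorProduct.lid k H).toLinearMap ∘ₗ map counit LinearMap.id
    with heL
  have hmul : ∀ u v, eL (mulT mul u v) = mul (eL u) (eL v) := by
    intro u v
    induction u using TensorProduct.induction_on with
    | zero => simp
    | tmul a b =>
      induction v using TensorProduct.induction_on with
      | zero => simp
      | tmul c d => simp [heL, mulT_tmul, hH.counit_mul, smul_smul, mul_comm]
      | add u' v' hu hv => simp only [map_add, hu, hv]
    | add u' v' hu hv => simp only [map_add, LinearMap.add_apply, hu, hv]
  have hsymm : ∀ u, eL ((TensorProduct.congr alpha alpha).symm u) = alpha.symm (eL u) := by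
    intro u
    induction u using TensorProduct.induction_on with
    | zero => simp
    | tmul a b =>
      have hca : ∀ c, counit (alpha.symm c) = counit c := fun c => by
        conv_rhs => rw [← alpha.apply_symm_apply c, hH.counit_alpha]
      simp [heL, hca]
    | add u' v' hu hv => simp only [map_add, hu, hv]
  have hone : eL (one ⊗ₜ[k] one) = one := by simp [heL, hH.counit_one]
  have key := m0_map (mS := mul) (aS := alpha) eL hmul hsymm σ ϱ
  rw [m0T_sigma_rho mul one alpha comul counit σ ϱ hH hσ, hone] at key
  have hes : eL σ = one := hσ.T2l
  rw [hes] at key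
  rw [m0_one_mul hH.toAlg] at key
  exact key.symm

lemma eR_rho : (TensorProduct.rid k H) (map LinearMap.id counit ϱ) = one := by
  set eR : H ⊗[k] H →ₗ[k] H := (TensorProduct.rid k H).toLinearMap ∘ₗ map LinearMap.id counit
    with heR
  have hmul : ∀ u v, eR (mulT mul u v) = mul (eR u) (eR v) := by
    intro u v
    induction u using TensorProduct.induction_on with
    | zero => simp
    | tmul a b =>
      induction v using TensorProduct.induction_on with
      | zero => simp
      | tmul c d => simp [heR, mulT_tmul, hH.counit_mul, smul_smul, mul_comm]
      | add u' v' hu hv => simp only [map_add, hu, hv]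
    | add u' v' hu hv => simp only [map_add, LinearMap.add_apply, hu, hv]
  have hsymm : ∀ u, eR ((TensorProduct.congr alpha alpha).symm u) = alpha.symm (eR u) := by
    intro u
    induction u using TensorProduct.induction_on with
    | zero => simp
    | tmul a b =>
      have hca : ∀ c, counit (alpha.symm c) = counit c := fun c => by
        conv_rhs => rw [← alpha.apply_symm_apply c, hH.counit_alpha]
      simp [heR, hca]
    | add u' v' hu hv => simp only [map_add, hu, hv]
  have hone : eR (one ⊗ₜ[k] one) = one := by simp [heR, hH.counit_one]
  have key := m0_map (mS := mul) (aS := alpha) eR hmul hsymm σ ϱ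
  rw [m0T_sigma_rho mul one alpha comul counit σ ϱ hH hσ, hone] at key
  have hes : eR σ = one := hσ.T2r
  rw [hes] at key
  rw [m0_one_mul hH.toAlg] at key
  exact key.symm

lemma comul_alpha_symm (b : H) :
    comul (alpha.symm b) = (TensorProduct.congr alpha alpha).symm (comul b) := by
  apply (TensorProduct.congr alpha alpha).injective
  rw [LinearEquiv.apply_symm_apply, congr_coe, ← hH.comul_alpha, alpha.apply_symm_apply]

lemma I3 :
    map LinearMap.id ((mulT mul).flip ϱ ∘ₗ comul) ϱ
      = TensorProduct.assoc k H H H (map ((mulT mul).flip ϱ ∘ₗ comul) LinearMap.id ϱ) := by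
  have hAlg := hH.toAlg
  have hT := hTalg mul one alpha comul counit hH
  have hcs : ∀ b, (TensorProduct.congr alpha alpha).symm (comul (alpha b)) = comul b := by
    intro b
    rw [← comul_alpha_symm mul one alpha comul counit σ ϱ hH hσ, LinearEquiv.symm_apply_apply]
  have hss : (TensorProduct.congr alpha alpha).symm σ = σ :=
    aT_symm_sigma mul one alpha comul counit σ ϱ hH hσ
  have hsr : (TensorProduct.congr alpha alpha).symm ϱ = ϱ := by
    conv_lhs => rw [← aT_rho mul one alpha comul counit σ ϱ hH hσ]
    simp
  have h3alg : IsMonHomAlgebra (pairMap mul (mulT mul)) (one ⊗ₜ[k] (one ⊗ₜ[k] one))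
      (TensorProduct.congr alpha (TensorProduct.congr alpha alpha)) := hAlg.pair hT
  have h'alg : IsMonHomAlgebra (pairMap (mulT mul) mul) ((one ⊗ₜ[k] one) ⊗ₜ[k] one)
      (TensorProduct.congr (TensorProduct.congr alpha alpha) alpha) := hT.pair hAlg
  have hone_s : alpha.symm one = one := symm_one hAlg
  -- `f1 = id ⊗ α`
  have hmul1 : ∀ u v, map (R := k) LinearMap.id alpha.toLinearMap (mulT mul u v)
      = mulT mul (map LinearMap.id alpha.toLinearMap u) (map LinearMap.id alpha.toLinearMap v) := by
    intro u v
    induction u using TensorProduct.induction_on with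
    | zero => simp
    | tmul a b =>
      induction v using TensorProduct.induction_on with
      | zero => simp
      | tmul c d => simp [hH.alpha_mul]
      | add x y hx hy => simp only [map_add, hx, hy]
    | add x y hx hy => simp only [map_add, LinearMap.add_apply, hx, hy]
  have hsymm1 : ∀ u, map (R := k) LinearMap.id alpha.toLinearMap
        ((TensorProduct.congr alpha alpha).symm u)
      = (TensorProduct.congr alpha alpha).symm (map LinearMap.id alpha.toLinearMap u) := by
    intro u
    induction u using TensorProduct.induction_on with
    | zero => simp
    | tmul a b => simp
    | add x y hx hy => simp only [map_add, hx, hy]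
  have hone1 : map (R := k) LinearMap.id alpha.toLinearMap (one ⊗ₜ[k] one) = one ⊗ₜ[k] one := by
    simp [hH.alpha_one]
  -- `f1' = α ⊗ id`
  have hmul1' : ∀ u v, map (R := k) alpha.toLinearMap LinearMap.id (mulT mul u v)
      = mulT mul (map alpha.toLinearMap LinearMap.id u) (map alpha.toLinearMap LinearMap.id v) := by
    intro u v
    induction u using TensorProduct.induction_on with
    | zero => simp
    | tmul a b =>
      induction v using TensorProduct.induction_on with
      | zero => simp
      | tmul c d => simp [hH.alpha_mul]
      | add x y hx hy => simp only [map_add, hx, hy]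
    | add x y hx hy => simp only [map_add, LinearMap.add_apply, hx, hy]
  have hsymm1' : ∀ u, map (R := k) alpha.toLinearMap LinearMap.id
        ((TensorProduct.congr alpha alpha).symm u)
      = (TensorProduct.congr alpha alpha).symm (map alpha.toLinearMap LinearMap.id u) := by
    intro u
    induction u using TensorProduct.induction_on with
    | zero => simp
    | tmul a b => simp
    | add x y hx hy => simp only [map_add, hx, hy]
  have hone1' : map (R := k) alpha.toLinearMap LinearMap.id (one ⊗ₜ[k] one) = one ⊗ₜ[k] one := by
    simp [hH.alpha_one]
  -- `g = id ⊗ Δ`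
  have hmulg : ∀ u v, map (R := k) LinearMap.id comul (mulT mul u v)
      = pairMap mul (mulT mul) (map LinearMap.id comul u) (map LinearMap.id comul v) := by
    intro u v
    induction u using TensorProduct.induction_on with
    | zero => simp
    | tmul a b =>
      induction v using TensorProduct.induction_on with
      | zero => simp
      | tmul c d => simp [hH.comul_mul]
      | add x y hx hy => simp only [map_add, hx, hy]
    | add x y hx hy => simp only [map_add, LinearMap.add_apply, hx, hy]
  have hsymmg : ∀ u, map (R := k) LinearMap.id comul ((TensorProduct.congr alpha alpha).symm u)
      = (TensorProduct.congr alpha (TensorProduct.congr alpha alpha)).symm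
          (map LinearMap.id comul u) := by
    intro u
    induction u using TensorProduct.induction_on with
    | zero => simp
    | tmul a b =>
      simp only [TensorProduct.congr_symm_tmul, map_tmul, LinearMap.id_coe, id_eq]
      rw [comul_alpha_symm mul one alpha comul counit σ ϱ hH hσ]
    | add x y hx hy => simp only [map_add, hx, hy]
  have honeg : map (R := k) LinearMap.id comul (one ⊗ₜ[k] one)
      = one ⊗ₜ[k] (one ⊗ₜ[k] one) := by simp [hH.comul_one]
  -- `g' = Δ ⊗ id`
  have hmulg' : ∀ u v, map (R := k) comul LinearMap.id (mulT mul u v)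
      = pairMap (mulT mul) mul (map comul LinearMap.id u) (map comul LinearMap.id v) := by
    intro u v
    induction u using TensorProduct.induction_on with
    | zero => simp
    | tmul a b =>
      induction v using TensorProduct.induction_on with
      | zero => simp
      | tmul c d => simp [hH.comul_mul]
      | add x y hx hy => simp only [map_add, hx, hy]
    | add x y hx hy => simp only [map_add, LinearMap.add_apply, hx, hy]
  have hsymmg' : ∀ u, map (R := k) comul LinearMap.id ((TensorProduct.congr alpha alpha).symm u)
      = (TensorProduct.congr (TensorProduct.congr alpha alpha) alpha).symm
          (map comul LinearMap.id u) := by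
    intro u
    induction u using TensorProduct.induction_on with
    | zero => simp
    | tmul a b =>
      simp only [TensorProduct.congr_symm_tmul, map_tmul, LinearMap.id_coe, id_eq]
      rw [comul_alpha_symm mul one alpha comul counit σ ϱ hH hσ]
    | add x y hx hy => simp only [map_add, hx, hy]
  have honeg' : map (R := k) comul LinearMap.id (one ⊗ₜ[k] one)
      = (one ⊗ₜ[k] one) ⊗ₜ[k] one := by simp [hH.comul_one]
  -- the associator
  have hmulas : ∀ u v, TensorProduct.assoc k H H H (pairMap (mulT mul) mul u v)
      = pairMap mul (mulT mul) (TensorProduct.assoc k H H H u)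
          (TensorProduct.assoc k H H H v) := by
    intro u v
    induction u using TensorProduct.induction_on with
    | zero => simp
    | tmul w c =>
      induction w using TensorProduct.induction_on with
      | zero => simp
      | tmul a b =>
        induction v using TensorProduct.induction_on with
        | zero => simp
        | tmul w' f =>
          induction w' using TensorProduct.induction_on with
          | zero => simp
          | tmul d e => simp
          | add x y hx hy =>
            simp only [add_tmul, map_add, LinearMap.add_apply, hx, hy]
        | add x y hx hy => simp only [map_add, hx, hy]
      | add x y hx hy =>
        simp only [add_tmul, map_add, LinearMap.add_apply, hx, hy]
    | add x y hx hy => simp only [map_add, LinearMap.add_apply, hx, hy]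
  have hsymmas : ∀ u, TensorProduct.assoc k H H H
        ((TensorProduct.congr (TensorProduct.congr alpha alpha) alpha).symm u)
      = (TensorProduct.congr alpha (TensorProduct.congr alpha alpha)).symm
          (TensorProduct.assoc k H H H u) := by
    intro u
    induction u using TensorProduct.induction_on with
    | zero => simp
    | tmul w c =>
      induction w using TensorProduct.induction_on with
      | zero => simp
      | tmul a b => simp
      | add x y hx hy => simp only [add_tmul, map_add, hx, hy]
    | add x y hx hy => simp only [map_add, hx, hy]
  have honeas : TensorProduct.assoc k H H H ((one ⊗ₜ[k] one) ⊗ₜ[k] one)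
      = one ⊗ₜ[k] (one ⊗ₜ[k] one) := by simp
  -- basic inverse pairs
  have hinvT : m0 (mulT mul) (TensorProduct.congr alpha alpha) σ ϱ = one ⊗ₜ[k] one
      ∧ m0 (mulT mul) (TensorProduct.congr alpha alpha) ϱ σ = one ⊗ₜ[k] one :=
    ⟨m0T_sigma_rho mul one alpha comul counit σ ϱ hH hσ,
     m0T_rho_sigma mul one alpha comul counit σ ϱ hH hσ⟩
  have p1 : m0 (pairMap mul (mulT mul)) (TensorProduct.congr alpha (TensorProduct.congr alpha alpha))
        (one ⊗ₜ[k] σ) (one ⊗ₜ[k] ϱ) = one ⊗ₜ[k] (one ⊗ₜ[k] one)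
      ∧ m0 (pairMap mul (mulT mul)) (TensorProduct.congr alpha (TensorProduct.congr alpha alpha))
        (one ⊗ₜ[k] ϱ) (one ⊗ₜ[k] σ) = one ⊗ₜ[k] (one ⊗ₜ[k] one) := by
    constructor <;>
    · simp [m0, TensorProduct.congr_symm_tmul, hone_s, hss, hsr, pairMap_tmul,
        hσ.mul_inv, hσ.inv_mul, hAlg.one_mul', hH.alpha_one]
  have p1' : m0 (pairMap (mulT mul) mul) (TensorProduct.congr (TensorProduct.congr alpha alpha) alpha)
        (σ ⊗ₜ[k] one) (ϱ ⊗ₜ[k] one) = (one ⊗ₜ[k] one) ⊗ₜ[k] one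
      ∧ m0 (pairMap (mulT mul) mul) (TensorProduct.congr (TensorProduct.congr alpha alpha) alpha)
        (ϱ ⊗ₜ[k] one) (σ ⊗ₜ[k] one) = (one ⊗ₜ[k] one) ⊗ₜ[k] one := by
    constructor <;>
    · simp [m0, TensorProduct.congr_symm_tmul, hone_s, hss, hsr, pairMap_tmul,
        hσ.mul_inv, hσ.inv_mul, hAlg.one_mul', hH.alpha_one]
  have pf1 := m0_map_inv (mT := mulT mul) (aT := TensorProduct.congr alpha alpha)
    (map LinearMap.id alpha.toLinearMap) hmul1 hsymm1 hone1 hinvT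
  have pf1' := m0_map_inv (mT := mulT mul) (aT := TensorProduct.congr alpha alpha)
    (map alpha.toLinearMap LinearMap.id) hmul1' hsymm1' hone1' hinvT
  have p2 := m0_map_inv (mT := mulT mul) (aT := TensorProduct.congr alpha alpha)
    (map LinearMap.id comul) hmulg hsymmg honeg pf1
  have p2' := m0_map_inv (mT := mulT mul) (aT := TensorProduct.congr alpha alpha)
    (map comul LinearMap.id) hmulg' hsymmg' honeg' pf1'
  have pX := m0_inv_mul h3alg p1 p2
  have pX' := m0_inv_mul h'alg p1' p2'
  have pXas := m0_map_inv (mT := pairMap (mulT mul) mul)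
    (aT := TensorProduct.congr (TensorProduct.congr alpha alpha) alpha)
    (TensorProduct.assoc k H H H).toLinearMap
    (fun u v => hmulas u v) (fun u => hsymmas u) honeas pX'
  -- rewrite the two sides of T3
  have s1 : ∀ t : H ⊗[k] H, map LinearMap.id (mulT mul σ) (map LinearMap.id comul t)
      = m0 (pairMap mul (mulT mul))
          (TensorProduct.congr alpha (TensorProduct.congr alpha alpha))
          (one ⊗ₜ[k] σ) (map LinearMap.id comul (map LinearMap.id alpha.toLinearMap t)) := by
    intro t
    induction t using TensorProduct.induction_on with
    | zero => simp [m0]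
    | tmul h w =>
      simp [m0, TensorProduct.congr_symm_tmul, hone_s, hss, hcs, pairMap_tmul,
        hAlg.one_mul']
    | add x y hx hy =>
      simp only [m0] at hx hy ⊢
      simp only [map_add, LinearMap.add_apply, hx, hy]
  have s2 : ∀ t : H ⊗[k] H, map (mulT mul σ) LinearMap.id (map comul LinearMap.id t)
      = m0 (pairMap (mulT mul) mul)
          (TensorProduct.congr (TensorProduct.congr alpha alpha) alpha)
          (σ ⊗ₜ[k] one) (map comul LinearMap.id (map alpha.toLinearMap LinearMap.id t)) := by
    intro t
    induction t using TensorProduct.induction_on with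
    | zero => simp [m0]
    | tmul h w =>
      simp [m0, TensorProduct.congr_symm_tmul, hone_s, hss, hcs, pairMap_tmul,
        hAlg.one_mul']
    | add x y hx hy =>
      simp only [m0] at hx hy ⊢
      simp only [map_add, LinearMap.add_apply, hx, hy]
  have hXX : m0 (pairMap mul (mulT mul))
        (TensorProduct.congr alpha (TensorProduct.congr alpha alpha)) (one ⊗ₜ[k] σ)
        (map LinearMap.id comul (map LinearMap.id alpha.toLinearMap σ))
      = TensorProduct.assoc k H H H
          (m0 (pairMap (mulT mul) mul)
            (TensorProduct.congr (TensorProduct.congr alpha alpha) alpha) (σ ⊗ₜ[k] one)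
            (map comul LinearMap.id (map alpha.toLinearMap LinearMap.id σ))) := by
    rw [← s1 σ, ← s2 σ]
    exact hσ.T3
  -- uniqueness of inverses
  have hasm0 : ∀ x y, (TensorProduct.assoc k H H H)
        (m0 (pairMap (mulT mul) mul)
          (TensorProduct.congr (TensorProduct.congr alpha alpha) alpha) x y)
      = m0 (pairMap mul (mulT mul))
          (TensorProduct.congr alpha (TensorProduct.congr alpha alpha))
          (TensorProduct.assoc k H H H x) (TensorProduct.assoc k H H H y) :=
    fun x y => m0_map (TensorProduct.assoc k H H H).toLinearMap
      (fun u v => hmulas u v) (fun u => hsymmas u) x y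
  have key : m0 (pairMap mul (mulT mul))
        (TensorProduct.congr alpha (TensorProduct.congr alpha alpha))
        (map LinearMap.id comul (map LinearMap.id alpha.toLinearMap ϱ)) (one ⊗ₜ[k] ϱ)
      = TensorProduct.assoc k H H H
          (m0 (pairMap (mulT mul) mul)
            (TensorProduct.congr (TensorProduct.congr alpha alpha) alpha)
            (map comul LinearMap.id (map alpha.toLinearMap LinearMap.id ϱ)) (ϱ ⊗ₜ[k] one)) := by
    apply m0_inv_unique h3alg (x := m0 (pairMap mul (mulT mul))
      (TensorProduct.congr alpha (TensorProduct.congr alpha alpha)) (one ⊗ₜ[k] σ)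
      (map LinearMap.id comul (map LinearMap.id alpha.toLinearMap σ)))
    · exact pX.1
    · rw [hXX, hasm0, ← hasm0]
      exact pXas.2
  -- unwind
  have u1 : ∀ t : H ⊗[k] H, m0 (pairMap mul (mulT mul))
        (TensorProduct.congr alpha (TensorProduct.congr alpha alpha))
        (map LinearMap.id comul (map LinearMap.id alpha.toLinearMap t)) (one ⊗ₜ[k] ϱ)
      = map LinearMap.id ((mulT mul).flip ϱ ∘ₗ comul) t := by
    intro t
    induction t using TensorProduct.induction_on with
    | zero => simp [m0]
    | tmul h w =>
      simp [m0, TensorProduct.congr_symm_tmul, hone_s, hsr, hcs, pairMap_tmul,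
        hAlg.mul_one']
    | add x y hx hy =>
      simp only [m0] at hx hy ⊢
      simp only [map_add, LinearMap.add_apply, hx, hy]
  have u2 : ∀ t : H ⊗[k] H, m0 (pairMap (mulT mul) mul)
        (TensorProduct.congr (TensorProduct.congr alpha alpha) alpha)
        (map comul LinearMap.id (map alpha.toLinearMap LinearMap.id t)) (ϱ ⊗ₜ[k] one)
      = map ((mulT mul).flip ϱ ∘ₗ comul) LinearMap.id t := by
    intro t
    induction t using TensorProduct.induction_on with
    | zero => simp [m0]
    | tmul h w =>
      simp [m0, TensorProduct.congr_symm_tmul, hone_s, hsr, hcs, pairMap_tmul,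
        hAlg.mul_one']
    | add x y hx hy =>
      simp only [m0] at hx hy ⊢
      simp only [map_add, LinearMap.add_apply, hx, hy]
  rw [← u1 ϱ, ← u2 ϱ, key]

end Twist

end Aux

/-- (Proposition 4.4(1)) Twisting the product of an `H`-Hom-module
algebra `A` by the inverse `ϱ` of a Drinfeld twist, `a ∘ b = (ϱ⁽¹⁾·a)(ϱ⁽²⁾·b)`,
yields a monoidal Hom-algebra `(A, α_A², ∘, 1_A)`. -/
theorem module_algebra_twist
    {k H A : Type*} [CommRing k] [AddCommGroup H] [Module k H]
    [AddCommGroup A] [Module k A]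
    (mul : H →ₗ[k] H →ₗ[k] H) (one : H) (alpha : H ≃ₗ[k] H)
    (comul : H →ₗ[k] H ⊗[k] H) (counit : H →ₗ[k] k) (σ ϱ : H ⊗[k] H)
    (hH : IsMonHomBialgebra mul one alpha comul counit)
    (hσ : IsTwist mul one alpha comul counit σ ϱ)
    (mulA : A →ₗ[k] A →ₗ[k] A) (oneA : A) (alA : A ≃ₗ[k] A)
    (act : H →ₗ[k] A →ₗ[k] A)
    (hA : IsMonHomAlgebra mulA oneA alA)
    (hmod : IsHomModule mul one alpha alA act)
    -- module-algebra compatibility: `h·(ab) = (h₁·a)(h₂·b)` and `h·1 = ε(h)1`: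
    (hma₁ : ∀ h a b, act h (mulA a b)
      = TensorProduct.lift mulA (pairMap act act (comul h) (a ⊗ₜ[k] b)))
    (hma₂ : ∀ h, act h oneA = counit h • oneA) :
    IsMonHomAlgebra
      ((TensorProduct.mk k A A).compr₂ (TensorProduct.lift mulA ∘ₗ pairMap act act ϱ))
      oneA (alA.trans alA) := by
  have hrho := map_alpha_rho mul one alpha comul counit σ ϱ hH hσ
  have hrho_s := map_alpha_symm_rho mul one alpha comul counit σ ϱ hH hσ
  have hL := eL_rho mul one alpha comul counit σ ϱ hH hσ
  have hR := eR_rho mul one alpha comul counit σ ϱ hH hσ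
  have hI3 := I3 mul one alpha comul counit σ ϱ hH hσ
  have hsm : ∀ (x y : H) (m : A), act x (act y m) = act (mul (alpha.symm x) y) (alA m) := by
    intro x y m
    conv_lhs => rw [← alpha.apply_symm_apply x]
    rw [hmod.hom_smul]
  have M1 : ∀ (t : H ⊗[k] H) (a b : A),
      alA (TensorProduct.lift mulA (pairMap act act t (a ⊗ₜ[k] b)))
        = TensorProduct.lift mulA (pairMap act act
            (map alpha.toLinearMap alpha.toLinearMap t) (alA a ⊗ₜ[k] alA b)) := by
    intro t a b
    induction t using TensorProduct.induction_on with
    | zero => simp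
    | tmul h g => simp [pairMap_tmul, hA.alpha_mul, hmod.compat]
    | add x y hx hy => simp only [map_add, LinearMap.add_apply, hx, hy]
  have M2 : ∀ (t : H ⊗[k] H) (x : A),
      TensorProduct.lift mulA (pairMap act act t (oneA ⊗ₜ[k] x))
        = alA (act ((TensorProduct.lid k H) (map counit LinearMap.id t)) x) := by
    intro t x
    induction t using TensorProduct.induction_on with
    | zero => simp
    | tmul h g => simp [pairMap_tmul, hma₂, hA.one_mul']
    | add u v hu hv => simp only [map_add, LinearMap.add_apply, hu, hv]
  have M3 : ∀ (t : H ⊗[k] H) (x : A),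
      TensorProduct.lift mulA (pairMap act act t (x ⊗ₜ[k] oneA))
        = alA (act ((TensorProduct.rid k H) (map LinearMap.id counit t)) x) := by
    intro t x
    induction t using TensorProduct.induction_on with
    | zero => simp
    | tmul h g => simp [pairMap_tmul, hma₂, hA.mul_one']
    | add u v hu hv => simp only [map_add, LinearMap.add_apply, hu, hv]
  have P1 : ∀ (s : H ⊗[k] H) (b' c' : A),
      TensorProduct.lift mulA (pairMap act act s (b' ⊗ₜ[k] c'))
        = TensorProduct.lift mulA (map (act.flip b') (act.flip c') s) := by
    intro s b' c'
    induction s using TensorProduct.induction_on with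
    | zero => simp
    | tmul p q => simp [pairMap_tmul]
    | add u v hu hv => simp only [map_add, LinearMap.add_apply, hu, hv]
  have M4a : ∀ (u : H ⊗[k] H) (p q : H) (b' c' : A),
      pairMap act act u (act p b' ⊗ₜ[k] act q c')
        = pairMap act act
            (mulT mul (map alpha.symm.toLinearMap alpha.symm.toLinearMap u) (p ⊗ₜ[k] q))
            (alA b' ⊗ₜ[k] alA c') := by
    intro u p q b' c'
    induction u using TensorProduct.induction_on with
    | zero => simp
    | tmul g1 g2 => simp [pairMap_tmul, mulT_tmul, hsm]
    | add x y hx hy => simp only [map_add, LinearMap.add_apply, hx, hy]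
  have M4b : ∀ (gg : H) (s : H ⊗[k] H) (b' c' : A),
      act gg (TensorProduct.lift mulA (pairMap act act s (b' ⊗ₜ[k] c')))
        = TensorProduct.lift mulA (pairMap act act
            (mulT mul (comul (alpha.symm gg)) s) (alA b' ⊗ₜ[k] alA c')) := by
    intro gg s b' c'
    have hcs : comul (alpha.symm gg)
        = map alpha.symm.toLinearMap alpha.symm.toLinearMap (comul gg) := by
      rw [comul_alpha_symm mul one alpha comul counit σ ϱ hH hσ, congr_symm_coe]
    induction s using TensorProduct.induction_on with
    | zero => simp
    | tmul p q =>
      rw [show pairMap act act (p ⊗ₜ[k] q) (b' ⊗ₜ[k] c') = act p b' ⊗ₜ[k] act q c' from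
        pairMap_tmul act act p q b' c', TensorProduct.lift.tmul, hma₁,
        M4a (comul gg) p q b' c', hcs]
    | add x y hx hy =>
      simp only [map_add, LinearMap.add_apply, hx, hy]
  -- the three pieces of the hom-associativity computation
  constructor
  · -- alpha_mul
    intro a b
    simp only [LinearMap.compr₂_apply, TensorProduct.mk_apply, LinearMap.coe_comp,
      Function.comp_apply, LinearEquiv.trans_apply]
    rw [M1, M1, hrho, hrho]
  · -- hom_assoc
    intro a b c
    simp only [LinearMap.compr₂_apply, TensorProduct.mk_apply, LinearMap.coe_comp,
      Function.comp_apply, LinearEquiv.trans_apply]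
    -- notation for the two trilinear functionals
    set Fl : H ⊗[k] (H ⊗[k] H) →ₗ[k] A :=
      TensorProduct.lift mulA ∘ₗ
        map (act.flip (alA (alA a)) ∘ₗ alpha.toLinearMap)
          (TensorProduct.lift mulA ∘ₗ map (act.flip (alA b)) (act.flip (alA c)))
      with hFl
    set Fr : (H ⊗[k] H) ⊗[k] H →ₗ[k] A :=
      TensorProduct.lift mulA ∘ₗ
        map (TensorProduct.lift mulA ∘ₗ map (act.flip (alA a)) (act.flip (alA b)))
          (act.flip (alA (alA c)) ∘ₗ alpha.toLinearMap)
      with hFr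
    have stepB : ∀ v : (H ⊗[k] H) ⊗[k] H, Fl (TensorProduct.assoc k H H H v) = Fr v := by
      intro v
      induction v using TensorProduct.induction_on with
      | zero => simp
      | tmul w x =>
        induction w using TensorProduct.induction_on with
        | zero => simp
        | tmul y z =>
          simp only [hFl, hFr, TensorProduct.assoc_tmul, LinearMap.coe_comp,
            Function.comp_apply, map_tmul, TensorProduct.lift.tmul, LinearMap.flip_apply,
            LinearEquiv.coe_coe]
          rw [show act (alpha y) (alA (alA a)) = alA (act y (alA a)) from (hmod.compat y (alA a)).symm,
            hA.hom_assoc, hmod.compat]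
        | add x1 y1 hx hy => simp only [add_tmul, map_add, LinearMap.add_apply, hx, hy]
      | add x1 y1 hx hy => simp only [map_add, LinearMap.add_apply, hx, hy]
    have stepA : ∀ t : H ⊗[k] H,
        TensorProduct.lift mulA (pairMap act act t
          ((alA (alA a)) ⊗ₜ[k] TensorProduct.lift mulA (pairMap act act ϱ (b ⊗ₜ[k] c))))
        = Fl (map LinearMap.id ((mulT mul).flip ϱ ∘ₗ comul)
            (map alpha.symm.toLinearMap alpha.symm.toLinearMap t)) := by
      intro t
      induction t using TensorProduct.induction_on with
      | zero => simp
      | tmul h g =>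
        rw [show pairMap act act (h ⊗ₜ[k] g) (alA (alA a) ⊗ₜ[k]
              TensorProduct.lift mulA (pairMap act act ϱ (b ⊗ₜ[k] c)))
            = act h (alA (alA a)) ⊗ₜ[k]
              act g (TensorProduct.lift mulA (pairMap act act ϱ (b ⊗ₜ[k] c))) from
          pairMap_tmul _ _ _ _ _ _, TensorProduct.lift.tmul, M4b, P1]
        simp only [hFl, map_tmul, LinearMap.coe_comp, Function.comp_apply,
          LinearMap.id_coe, id_eq, TensorProduct.lift.tmul, LinearMap.flip_apply,
          LinearEquiv.coe_coe, LinearMap.flip_apply]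
        rw [alpha.apply_symm_apply]
      | add x y hx hy => simp only [map_add, LinearMap.add_apply, hx, hy]
    have stepD : ∀ t : H ⊗[k] H,
        TensorProduct.lift mulA (pairMap act act t
          ((TensorProduct.lift mulA (pairMap act act ϱ (a ⊗ₜ[k] b))) ⊗ₜ[k] alA (alA c)))
        = Fr (map ((mulT mul).flip ϱ ∘ₗ comul) LinearMap.id
            (map alpha.symm.toLinearMap alpha.symm.toLinearMap t)) := by
      intro t
      induction t using TensorProduct.induction_on with
      | zero => simp
      | tmul h g =>
        rw [show pairMap act act (h ⊗ₜ[k] g)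
              ((TensorProduct.lift mulA (pairMap act act ϱ (a ⊗ₜ[k] b))) ⊗ₜ[k] alA (alA c))
            = act h (TensorProduct.lift mulA (pairMap act act ϱ (a ⊗ₜ[k] b))) ⊗ₜ[k]
              act g (alA (alA c)) from
          pairMap_tmul _ _ _ _ _ _, TensorProduct.lift.tmul, M4b, P1]
        simp only [hFr, map_tmul, LinearMap.coe_comp, Function.comp_apply,
          LinearMap.id_coe, id_eq, TensorProduct.lift.tmul, LinearMap.flip_apply,
          LinearEquiv.coe_coe]
        rw [alpha.apply_symm_apply]
      | add x y hx hy => simp only [map_add, LinearMap.add_apply, hx, hy]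
    calc TensorProduct.lift mulA (pairMap act act ϱ
          ((alA (alA a)) ⊗ₜ[k] TensorProduct.lift mulA (pairMap act act ϱ (b ⊗ₜ[k] c))))
        = Fl (map LinearMap.id ((mulT mul).flip ϱ ∘ₗ comul)
            (map alpha.symm.toLinearMap alpha.symm.toLinearMap ϱ)) := stepA ϱ
      _ = Fl (map LinearMap.id ((mulT mul).flip ϱ ∘ₗ comul) ϱ) := by rw [hrho_s]
      _ = Fl (TensorProduct.assoc k H H H (map ((mulT mul).flip ϱ ∘ₗ comul) LinearMap.id ϱ)) := by
            rw [hI3]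
      _ = Fr (map ((mulT mul).flip ϱ ∘ₗ comul) LinearMap.id ϱ) := stepB _
      _ = Fr (map ((mulT mul).flip ϱ ∘ₗ comul) LinearMap.id
            (map alpha.symm.toLinearMap alpha.symm.toLinearMap ϱ)) := by rw [hrho_s]
      _ = TensorProduct.lift mulA (pairMap act act ϱ
            ((TensorProduct.lift mulA (pairMap act act ϱ (a ⊗ₜ[k] b))) ⊗ₜ[k] alA (alA c))) :=
          (stepD ϱ).symm
  · -- alpha_one
    simp [hA.alpha_one]
  · -- one_mul'
    intro x
    simp only [LinearMap.compr₂_apply, TensorProduct.mk_apply, LinearMap.coe_comp,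
      Function.comp_apply, LinearEquiv.trans_apply]
    rw [M2, hL, hmod.one_smul']
  · -- mul_one'
    intro x
    simp only [LinearMap.compr₂_apply, TensorProduct.mk_apply, LinearMap.coe_comp,
      Function.comp_apply, LinearEquiv.trans_apply]
    rw [M3, hR, hmod.one_smul']

end HomTwist
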